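/- arXiv:1102.4911 — 2 statements merged into one kernel-verified Lean document; each statement's English description precedes it below -/
import Mathlib

section
/- For a rational number a/q with gcd(a,q)=1, if n is an integer with gcd(n,q)=d and n=md, then e(an/q) = (1/φ(q/d)) · Σ_{χ mod q/d} τ(χ̄) χ(ma), where τ(χ) = Σ_{b mod q} χ(b) e(b/q) is the Gauss sum and e(x)=e^{2πix}. -/
open Complex

/-- The Gauss sum `τ(χ) = ∑_{b mod N} χ(b) e(b/N)` with `e(x) = e^{2πix}`
(set to `0` in the degenerate case `N = 0`). -/
noncomputable def gaussSumE (N : ℕ) (χ : DirichletCharacter ℂ N) : ℂ :=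
  if h : N = 0 then 0 else
    haveI : NeZero N := ⟨h⟩
    ∑ b : ZMod N, χ b * Complex.exp (2 * Real.pi * I * (b.val : ℂ) / N)

/-- The complex-conjugate character `χ̄`. -/
noncomputable def conjChar {N : ℕ} (χ : DirichletCharacter ℂ N) : DirichletCharacter ℂ N :=
  χ.ringHomComp (starRingEnd ℂ)

lemma conjChar_apply {N : ℕ} (χ : DirichletCharacter ℂ N) (b : ZMod N) :
    conjChar χ b = χ⁻¹ b := by
  rw [← MulChar.star_apply' χ b]
  rfl

/-- `e(x/N)` only depends on `x` mod `N`. -/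
lemma exp_congr (N : ℕ) (hN : N ≠ 0) (x y : ℤ) (h : ((x : ZMod N)) = (y : ZMod N)) :
    Complex.exp (2 * Real.pi * I * x / N) = Complex.exp (2 * Real.pi * I * y / N) := by
  haveI : NeZero N := ⟨hN⟩
  have hdvd : (N : ℤ) ∣ x - y := by
    rwa [← ZMod.intCast_zmod_eq_zero_iff_dvd, Int.cast_sub, sub_eq_zero]
  obtain ⟨t, ht⟩ := hdvd
  have hx : (x : ℂ) = y + N * t := by
    have : x = y + N * t := by linarith [ht]
    exact_mod_cast congrArg (Int.cast : ℤ → ℂ) this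
  have hN' : (N : ℂ) ≠ 0 := Nat.cast_ne_zero.mpr hN
  rw [hx, show 2 * Real.pi * I * ((y : ℂ) + N * t) / N
      = 2 * Real.pi * I * y / N + t * (2 * Real.pi * I) by field_simp,
    Complex.exp_add, Complex.exp_int_mul_two_pi_mul_I, mul_one]

/-- If `gcd(a,q)=1`, `gcd(n,q)=d` and `n = m d`, then
`e(an/q) = (1/φ(q/d)) ∑_{χ mod q/d} τ(χ̄) χ(ma)`. -/
theorem additive_char_decomposition (q : ℕ) (hq : 0 < q) (a n m : ℤ) (d : ℕ)
    (ha : Int.gcd a q = 1) (hd : Int.gcd n q = d) (hn : n = m * d) :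
    Complex.exp (2 * Real.pi * I * a * n / q) =
      (Nat.totient (q / d) : ℂ)⁻¹ *
        ∑ χ : DirichletCharacter ℂ (q / d),
          gaussSumE (q / d) (conjChar χ) * χ ((m * a : ℤ) : ZMod (q / d)) := by
  have hq' : (q : ℤ) ≠ 0 := by exact_mod_cast hq.ne'
  have hd0 : 0 < d := by
    rw [← hd, Int.gcd_pos_iff]
    exact Or.inr hq'
  have hdvd : d ∣ q := by
    have h1 : (d : ℤ) ∣ (q : ℤ) := hd ▸ Int.gcd_dvd_right n q
    exact_mod_cast h1
  set N := q / d with hNdef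
  have hqdN : q = d * N := (Nat.mul_div_cancel' hdvd).symm
  have hN0 : N ≠ 0 := by
    rintro h
    rw [h, mul_zero] at hqdN
    exact hq.ne' hqdN
  haveI : NeZero N := ⟨hN0⟩
  -- coprimality of m*a with N
  have hcopm : Int.gcd m N = 1 := by
    have : Int.gcd n q = d * Int.gcd m N := by
      rw [hn, hqdN]
      push_cast
      rw [mul_comm (m : ℤ) (d : ℤ), Int.gcd_mul_left]
      simp
    rw [hd] at this
    nth_rewrite 1 [show d = d * 1 by ring] at this
    exact (Nat.eq_of_mul_eq_mul_left hd0 this).symm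
  have hcopa : Int.gcd a N = 1 := by
    have h1 : IsCoprime a (q : ℤ) := Int.isCoprime_iff_gcd_eq_one.mpr ha
    have h2 : (N : ℤ) ∣ (q : ℤ) := by exact_mod_cast Nat.div_dvd_of_dvd hdvd
    exact Int.isCoprime_iff_gcd_eq_one.mp (h1.of_isCoprime_of_dvd_right h2)
  have hcop : IsCoprime (m * a) (N : ℤ) :=
    IsCoprime.mul_left (Int.isCoprime_iff_gcd_eq_one.mpr hcopm)
      (Int.isCoprime_iff_gcd_eq_one.mpr hcopa)
  set c : ZMod N := ((m * a : ℤ) : ZMod N) with hc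
  have hcu : IsUnit c := by
    obtain ⟨u, v, huv⟩ := hcop
    refine IsUnit.of_mul_eq_one (a := c) ((u : ℤ) : ZMod N) ?_
    have := congrArg (Int.cast : ℤ → ZMod N) huv
    push_cast at this
    rw [ZMod.natCast_self, mul_zero, add_zero] at this
    rw [hc, ← this]; push_cast; ring
  have htot : (N.totient : ℂ) ≠ 0 := by
    exact_mod_cast (Nat.totient_pos.mpr (Nat.pos_of_ne_zero hN0)).ne'
  -- compute the RHS
  have key : ∑ χ : DirichletCharacter ℂ N,
      gaussSumE N (conjChar χ) * χ c
      = (N.totient : ℂ) * Complex.exp (2 * Real.pi * I * (c.val : ℂ) / N) := by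
    simp only [gaussSumE, dif_neg hN0, Finset.sum_mul]
    rw [Finset.sum_comm]
    have step : ∀ b : ZMod N,
        ∑ χ : DirichletCharacter ℂ N, conjChar χ b
          * Complex.exp (2 * Real.pi * I * (b.val : ℂ) / N) * χ c
        = (if b = c then (N.totient : ℂ) else 0)
            * Complex.exp (2 * Real.pi * I * (b.val : ℂ) / N) := by
      intro b
      by_cases hb : IsUnit b
      · rw [← DirichletCharacter.sum_char_inv_mul_char_eq ℂ hb c, Finset.sum_mul]
        refine Finset.sum_congr rfl fun χ _ => ?_
        have hinv : χ b⁻¹ = χ⁻¹ b := by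
          rw [MulChar.inv_apply_eq_inv']
          exact eq_inv_of_mul_eq_one_left (by rw [← map_mul, ZMod.inv_mul_of_unit b hb, map_one])
        rw [conjChar_apply, ← hinv]
        ring
      · have hbc : b ≠ c := fun h => hb (h ▸ hcu)
        rw [if_neg hbc, zero_mul]
        refine Finset.sum_eq_zero fun χ _ => ?_
        rw [conjChar_apply, MulChar.inv_apply_eq_inv',
          MulChar.map_nonunit χ (by simpa using hb), inv_zero, zero_mul, zero_mul]
    rw [Finset.sum_congr rfl fun b _ => step b]
    simp only [ite_mul, zero_mul, Finset.sum_ite_eq', Finset.mem_univ, if_true]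
  rw [key, ← mul_assoc, inv_mul_cancel₀ htot, one_mul]
  -- now identify the exponentials
  have hval : ((c.val : ℤ) : ZMod N) = ((m * a : ℤ) : ZMod N) := by
    rw [hc]; simp [ZMod.intCast_cast, ZMod.natCast_val]
  have h1 : Complex.exp (2 * Real.pi * I * ((c.val : ℤ) : ℂ) / N)
      = Complex.exp (2 * Real.pi * I * ((m * a : ℤ) : ℂ) / N) :=
    exp_congr N hN0 _ _ hval
  have hcast : ((c.val : ℤ) : ℂ) = (c.val : ℂ) := by push_cast; rfl
  rw [hcast] at h1
  rw [h1]
  congr 1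
  have hdC : (d : ℂ) ≠ 0 := Nat.cast_ne_zero.mpr hd0.ne'
  have hNC : (N : ℂ) ≠ 0 := Nat.cast_ne_zero.mpr hN0
  have hqC : (q : ℂ) = d * N := by exact_mod_cast congrArg (Nat.cast : ℕ → ℂ) hqdN
  have hnC : (n : ℂ) = m * d := by exact_mod_cast congrArg (Int.cast : ℤ → ℂ) hn
  rw [hqC, hnC]
  push_cast
  field_simp
end

section
/- The Euler product 𝔖_f*(c) = Π_p (1 + (1/p^{3c-1})(((p-1)/p)((p - p^c)/(p-1))³ - 1)) converges absolutely and defines an analytic function of c on the half-plane Re(c) > 1/2, and is uniformly bounded on any half-plane Re(c) > 1/2 + ε. -/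
open Complex

/-- The Euler factor of `𝔖_f*(c)` at the prime `p`:
`1 + (1/p^{3c-1})(((p-1)/p)((p-p^c)/(p-1))³ - 1)`. -/
noncomputable def sfStarFactor (c : ℂ) (p : Nat.Primes) : ℂ :=
  1 + (((p : ℕ) : ℂ) ^ (3 * c - 1))⁻¹ *
    (((((p : ℕ) : ℂ) - 1) / ((p : ℕ) : ℂ)) *
      ((((p : ℕ) : ℂ) - ((p : ℕ) : ℂ) ^ c) / (((p : ℕ) : ℂ) - 1)) ^ 3 - 1)

lemma sfStar_cast_ne (p : Nat.Primes) : ((p : ℕ) : ℂ) ≠ 0 :=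
  Nat.cast_ne_zero.mpr (by have := p.2.two_le; omega)

lemma sfStar_cast_sub_one_ne (p : Nat.Primes) : ((p : ℕ) : ℂ) - 1 ≠ 0 := by
  have h : ((p : ℕ) : ℂ) ≠ 1 := by
    have := p.2.two_le
    exact_mod_cast (by omega : (p : ℕ) ≠ 1)
  exact sub_ne_zero.mpr h

lemma sfStar_cpow_ne (p : Nat.Primes) (c : ℂ) : ((p : ℕ) : ℂ) ^ c ≠ 0 :=
  fun h => sfStar_cast_ne p ((cpow_eq_zero_iff _ _).1 h).1

lemma sfStarFactor_sub_one (c : ℂ) (p : Nat.Primes) :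
    sfStarFactor c p - 1 =
      (2 * ((p : ℕ) : ℂ) ^ 2 - ((p : ℕ) : ℂ) - 3 * ((p : ℕ) : ℂ) ^ 2 * (((p : ℕ) : ℂ) ^ c)
          + 3 * ((p : ℕ) : ℂ) * (((p : ℕ) : ℂ) ^ c) ^ 2 - (((p : ℕ) : ℂ) ^ c) ^ 3) /
        ((((p : ℕ) : ℂ) ^ c) ^ 3 * (((p : ℕ) : ℂ) - 1) ^ 2) := by
  have hP := sfStar_cast_ne p
  have hP1 := sfStar_cast_sub_one_ne p
  have hX := sfStar_cpow_ne p c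
  have key : ((p : ℕ) : ℂ) ^ (3 * c - 1) = (((p : ℕ) : ℂ) ^ c) ^ (3 : ℕ) / ((p : ℕ) : ℂ) := by
    rw [cpow_sub _ _ hP, cpow_one]
    congr 1
    rw [show (3 : ℂ) = ((3 : ℕ) : ℂ) by norm_num, cpow_nat_mul]
  unfold sfStarFactor
  rw [key]
  generalize ((p : ℕ) : ℂ) ^ c = X at hX ⊢
  generalize hQ : ((p : ℕ) : ℂ) = P at hP hP1 ⊢
  field_simp
  ring

lemma sfStar_real_bound {r t w : ℝ} (hr2 : 2 ≤ r) (ht1 : 1 ≤ t) (hw1 : 1 ≤ w)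
    (hwt : w ≤ t) (hw2 : w ^ 2 = r) :
    ((2 * r ^ 2 + r) + 3 * r ^ 2 * t + 3 * r * t ^ 2 + t ^ 3) / (t ^ 3 * (r - 1) ^ 2)
      ≤ 24 * (1 / t ^ 2 + 1 / w ^ 3) := by
  have ht0 : (0:ℝ) < t := by linarith
  have hw0 : (0:ℝ) < w := by linarith
  have hr1' : (0:ℝ) < r - 1 := by linarith
  have hden : (0:ℝ) < t ^ 3 * (r - 1) ^ 2 := by positivity
  have hq1 : 2 * r ^ 2 + r ≤ 12 * (r - 1) ^ 2 := by nlinarith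
  have hq2 : 3 * r ^ 2 ≤ 12 * (r - 1) ^ 2 := by nlinarith
  have e1 : (2 * r ^ 2 + r) / (t ^ 3 * (r - 1) ^ 2) ≤ 12 / t ^ 2 := by
    rw [div_le_div_iff₀ hden (by positivity)]
    calc (2 * r ^ 2 + r) * t ^ 2 ≤ (12 * (r - 1) ^ 2) * t ^ 2 := by nlinarith
      _ ≤ (12 * (r - 1) ^ 2) * (t ^ 2 * t) := by nlinarith
      _ = 12 * (t ^ 3 * (r - 1) ^ 2) := by ring
  have e2 : 3 * r ^ 2 / (t ^ 2 * (r - 1) ^ 2) ≤ 12 / t ^ 2 := by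
    rw [div_le_div_iff₀ (by positivity) (by positivity)]
    calc 3 * r ^ 2 * t ^ 2 ≤ (12 * (r - 1) ^ 2) * t ^ 2 := by nlinarith
      _ = 12 * (t ^ 2 * (r - 1) ^ 2) := by ring
  have e3 : 3 * r / (t * (r - 1) ^ 2) ≤ 12 / w ^ 3 := by
    rw [div_le_div_iff₀ (by positivity) (by positivity)]
    calc 3 * r * w ^ 3 = 3 * r ^ 2 * w := by rw [← hw2]; ring
      _ ≤ (12 * (r - 1) ^ 2) * w := by nlinarith
      _ ≤ (12 * (r - 1) ^ 2) * t := by nlinarith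
      _ = 12 * (t * (r - 1) ^ 2) := by ring
  have e4 : 1 / (r - 1) ^ 2 ≤ 4 / w ^ 3 := by
    rw [div_le_div_iff₀ (by positivity) (by positivity)]
    have hwr : w ≤ r := by nlinarith
    calc 1 * w ^ 3 = r * w := by rw [← hw2]; ring
      _ ≤ r * r := by nlinarith
      _ ≤ 4 * (r - 1) ^ 2 := by nlinarith
  have hsplit : ((2 * r ^ 2 + r) + 3 * r ^ 2 * t + 3 * r * t ^ 2 + t ^ 3) / (t ^ 3 * (r - 1) ^ 2)
      = (2 * r ^ 2 + r) / (t ^ 3 * (r - 1) ^ 2) + 3 * r ^ 2 / (t ^ 2 * (r - 1) ^ 2)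
        + 3 * r / (t * (r - 1) ^ 2) + 1 / (r - 1) ^ 2 := by
    field_simp
  rw [hsplit]
  have hfin : 12 / t ^ 2 + 12 / t ^ 2 + 12 / w ^ 3 + 4 / w ^ 3 ≤ 24 * (1 / t ^ 2 + 1 / w ^ 3) := by
    rw [show (24:ℝ) * (1 / t ^ 2 + 1 / w ^ 3) = 24 / t ^ 2 + 24 / w ^ 3 by ring,
      show (12:ℝ) / t ^ 2 + 12 / t ^ 2 + 12 / w ^ 3 + 4 / w ^ 3
        = 24 / t ^ 2 + 16 / w ^ 3 by ring]
    have h8 : (16:ℝ) / w ^ 3 ≤ 24 / w ^ 3 :=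
      (div_le_div_iff_of_pos_right (by positivity)).mpr (by norm_num)
    linarith
  linarith

lemma norm_sfStarFactor_sub_one_le {c : ℂ} (hc : 1 / 2 < c.re) (p : Nat.Primes) :
    ‖sfStarFactor c p - 1‖ ≤
      24 * (((p : ℕ) : ℝ) ^ (-(2 * c.re)) + ((p : ℕ) : ℝ) ^ (-(3 / 2) : ℝ)) := by
  have hr2 : (2 : ℝ) ≤ ((p : ℕ) : ℝ) := by exact_mod_cast p.2.two_le
  have hr0 : (0 : ℝ) < ((p : ℕ) : ℝ) := by linarith
  have hr1 : (1 : ℝ) ≤ ((p : ℕ) : ℝ) := by linarith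
  have ht0 : 0 < ((p : ℕ) : ℝ) ^ c.re := Real.rpow_pos_of_pos hr0 _
  have hw0 : 0 < ((p : ℕ) : ℝ) ^ ((1:ℝ)/2) := Real.rpow_pos_of_pos hr0 _
  have ht1 : 1 ≤ ((p : ℕ) : ℝ) ^ c.re := Real.one_le_rpow hr1 (by linarith)
  have hw1 : 1 ≤ ((p : ℕ) : ℝ) ^ ((1:ℝ)/2) := Real.one_le_rpow hr1 (by norm_num)
  have hwt : ((p : ℕ) : ℝ) ^ ((1:ℝ)/2) ≤ ((p : ℕ) : ℝ) ^ c.re :=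
    Real.rpow_le_rpow_of_exponent_le hr1 (by linarith)
  have hw2 : (((p : ℕ) : ℝ) ^ ((1:ℝ)/2)) ^ 2 = ((p : ℕ) : ℝ) := by
    rw [← Real.rpow_natCast (((p : ℕ) : ℝ) ^ ((1:ℝ)/2)) 2, ← Real.rpow_mul hr0.le]
    norm_num
  have hXnorm : ‖((p : ℕ) : ℂ) ^ c‖ = ((p : ℕ) : ℝ) ^ c.re :=
    norm_natCast_cpow_of_pos p.2.pos c
  have hPnorm : ‖((p : ℕ) : ℂ)‖ = ((p : ℕ) : ℝ) := by rw [Complex.norm_natCast]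
  have hP1norm : ‖((p : ℕ) : ℂ) - 1‖ = ((p : ℕ) : ℝ) - 1 := by
    have h : ((p : ℕ) : ℂ) - 1 = (((((p : ℕ) : ℝ)) - 1 : ℝ) : ℂ) := by push_cast; ring
    rw [h, Complex.norm_real]
    try simp only [Real.norm_eq_abs]
    exact abs_of_nonneg (by linarith)
  have htgt1 : ((p : ℕ) : ℝ) ^ (-(2 * c.re)) = 1 / (((p : ℕ) : ℝ) ^ c.re) ^ 2 := by
    rw [Real.rpow_neg hr0.le, ← Real.rpow_natCast (((p : ℕ) : ℝ) ^ c.re) 2,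
      ← Real.rpow_mul hr0.le, inv_eq_one_div]
    norm_num [mul_comm]
  have htgt2 : ((p : ℕ) : ℝ) ^ (-(3 / 2) : ℝ) = 1 / (((p : ℕ) : ℝ) ^ ((1:ℝ)/2)) ^ 3 := by
    rw [Real.rpow_neg hr0.le, ← Real.rpow_natCast (((p : ℕ) : ℝ) ^ ((1:ℝ)/2)) 3,
      ← Real.rpow_mul hr0.le, inv_eq_one_div]
    norm_num
  rw [sfStarFactor_sub_one, htgt1, htgt2, norm_div, norm_mul, norm_pow, norm_pow, hXnorm, hP1norm]
  have hnum : ‖2 * ((p : ℕ) : ℂ) ^ 2 - ((p : ℕ) : ℂ) - 3 * ((p : ℕ) : ℂ) ^ 2 * (((p : ℕ) : ℂ) ^ c)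
      + 3 * ((p : ℕ) : ℂ) * (((p : ℕ) : ℂ) ^ c) ^ 2 - (((p : ℕ) : ℂ) ^ c) ^ 3‖ ≤
      (2 * ((p : ℕ) : ℝ) ^ 2 + ((p : ℕ) : ℝ)) + 3 * ((p : ℕ) : ℝ) ^ 2 * (((p : ℕ) : ℝ) ^ c.re)
        + 3 * ((p : ℕ) : ℝ) * (((p : ℕ) : ℝ) ^ c.re) ^ 2 + (((p : ℕ) : ℝ) ^ c.re) ^ 3 := by
    have h1 : ‖2 * ((p : ℕ) : ℂ) ^ 2 - ((p : ℕ) : ℂ)‖ ≤ 2 * ((p : ℕ) : ℝ) ^ 2 + ((p : ℕ) : ℝ) := by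
      refine (norm_sub_le _ _).trans ?_
      simp [norm_mul, norm_pow, hPnorm]
    have h2 : ‖3 * ((p : ℕ) : ℂ) ^ 2 * (((p : ℕ) : ℂ) ^ c)‖
        = 3 * ((p : ℕ) : ℝ) ^ 2 * (((p : ℕ) : ℝ) ^ c.re) := by
      simp [norm_mul, norm_pow, hPnorm, hXnorm]
    have h3 : ‖3 * ((p : ℕ) : ℂ) * (((p : ℕ) : ℂ) ^ c) ^ 2‖
        = 3 * ((p : ℕ) : ℝ) * (((p : ℕ) : ℝ) ^ c.re) ^ 2 := by
      simp [norm_mul, norm_pow, hPnorm, hXnorm]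
    have h4 : ‖(((p : ℕ) : ℂ) ^ c) ^ 3‖ = (((p : ℕ) : ℝ) ^ c.re) ^ 3 := by
      simp [norm_pow, hXnorm]
    calc ‖2 * ((p : ℕ) : ℂ) ^ 2 - ((p : ℕ) : ℂ) - 3 * ((p : ℕ) : ℂ) ^ 2 * (((p : ℕ) : ℂ) ^ c)
        + 3 * ((p : ℕ) : ℂ) * (((p : ℕ) : ℂ) ^ c) ^ 2 - (((p : ℕ) : ℂ) ^ c) ^ 3‖
        ≤ ‖2 * ((p : ℕ) : ℂ) ^ 2 - ((p : ℕ) : ℂ) - 3 * ((p : ℕ) : ℂ) ^ 2 * (((p : ℕ) : ℂ) ^ c)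
          + 3 * ((p : ℕ) : ℂ) * (((p : ℕ) : ℂ) ^ c) ^ 2‖ + ‖(((p : ℕ) : ℂ) ^ c) ^ 3‖ :=
          norm_sub_le _ _
      _ ≤ (‖2 * ((p : ℕ) : ℂ) ^ 2 - ((p : ℕ) : ℂ) - 3 * ((p : ℕ) : ℂ) ^ 2 * (((p : ℕ) : ℂ) ^ c)‖
          + ‖3 * ((p : ℕ) : ℂ) * (((p : ℕ) : ℂ) ^ c) ^ 2‖) + ‖(((p : ℕ) : ℂ) ^ c) ^ 3‖ := by
          gcongr
          exact norm_add_le _ _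
      _ ≤ ((‖2 * ((p : ℕ) : ℂ) ^ 2 - ((p : ℕ) : ℂ)‖ + ‖3 * ((p : ℕ) : ℂ) ^ 2 * (((p : ℕ) : ℂ) ^ c)‖)
          + ‖3 * ((p : ℕ) : ℂ) * (((p : ℕ) : ℂ) ^ c) ^ 2‖) + ‖(((p : ℕ) : ℂ) ^ c) ^ 3‖ := by
          gcongr
          exact norm_sub_le _ _
      _ ≤ _ := by rw [h2, h3, h4]; linarith
  calc ‖2 * ((p : ℕ) : ℂ) ^ 2 - ((p : ℕ) : ℂ) - 3 * ((p : ℕ) : ℂ) ^ 2 * (((p : ℕ) : ℂ) ^ c)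
      + 3 * ((p : ℕ) : ℂ) * (((p : ℕ) : ℂ) ^ c) ^ 2 - (((p : ℕ) : ℂ) ^ c) ^ 3‖ /
        ((((p : ℕ) : ℝ) ^ c.re) ^ 3 * (((p : ℕ) : ℝ) - 1) ^ 2)
      ≤ ((2 * ((p : ℕ) : ℝ) ^ 2 + ((p : ℕ) : ℝ)) + 3 * ((p : ℕ) : ℝ) ^ 2 * (((p : ℕ) : ℝ) ^ c.re)
        + 3 * ((p : ℕ) : ℝ) * (((p : ℕ) : ℝ) ^ c.re) ^ 2 + (((p : ℕ) : ℝ) ^ c.re) ^ 3) /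
        ((((p : ℕ) : ℝ) ^ c.re) ^ 3 * (((p : ℕ) : ℝ) - 1) ^ 2) := by
        gcongr
    _ ≤ 24 * (1 / (((p : ℕ) : ℝ) ^ c.re) ^ 2 + 1 / (((p : ℕ) : ℝ) ^ ((1:ℝ)/2)) ^ 3) :=
        sfStar_real_bound hr2 ht1 hw1 hwt hw2

lemma sfStar_summable_rpow {s : ℝ} (hs : s < -1) :
    Summable (fun p : Nat.Primes => ((p : ℕ) : ℝ) ^ s) := by
  have h : Summable (fun n : ℕ => (n : ℝ) ^ s) := Real.summable_nat_rpow.mpr hs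
  exact h.comp_injective Nat.Primes.coe_nat_injective

lemma sfStar_majorant_summable {c : ℂ} (hc : 1 / 2 < c.re) :
    Summable (fun p : Nat.Primes =>
      24 * (((p : ℕ) : ℝ) ^ (-(2 * c.re)) + ((p : ℕ) : ℝ) ^ (-(3 / 2) : ℝ))) := by
  refine Summable.mul_left _ (Summable.add ?_ ?_)
  · exact sfStar_summable_rpow (by linarith)
  · exact sfStar_summable_rpow (by norm_num)

lemma sfStar_summable_norm {c : ℂ} (hc : 1 / 2 < c.re) :
    Summable (fun p : Nat.Primes => ‖sfStarFactor c p - 1‖) :=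
  Summable.of_nonneg_of_le (fun _ => norm_nonneg _)
    (fun p => norm_sfStarFactor_sub_one_le hc p) (sfStar_majorant_summable hc)

lemma sfStar_tail_small {c : ℂ} (hc : 1 / 2 < c.re) {p : Nat.Primes} (hp : 96 ≤ (p : ℕ)) :
    ‖sfStarFactor c p - 1‖ ≤ 1 / 2 := by
  have hr1 : (1 : ℝ) ≤ ((p : ℕ) : ℝ) := by
    have := p.2.two_le; exact_mod_cast by omega
  have hr96 : (96 : ℝ) ≤ ((p : ℕ) : ℝ) := by exact_mod_cast hp
  have h1 : ((p : ℕ) : ℝ) ^ (-(2 * c.re)) ≤ ((p : ℕ) : ℝ) ^ (-1 : ℝ) :=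
    Real.rpow_le_rpow_of_exponent_le hr1 (by linarith)
  have h2 : ((p : ℕ) : ℝ) ^ (-(3 / 2) : ℝ) ≤ ((p : ℕ) : ℝ) ^ (-1 : ℝ) :=
    Real.rpow_le_rpow_of_exponent_le hr1 (by norm_num)
  have h3 : ((p : ℕ) : ℝ) ^ (-1 : ℝ) = (((p : ℕ) : ℝ))⁻¹ := Real.rpow_neg_one _
  refine (norm_sfStarFactor_sub_one_le hc p).trans ?_
  have h4 : (((p : ℕ) : ℝ))⁻¹ ≤ 1 / 96 := by
    rw [inv_eq_one_div]
    exact div_le_div_of_nonneg_left (by norm_num) (by norm_num) hr96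
  calc 24 * (((p : ℕ) : ℝ) ^ (-(2 * c.re)) + ((p : ℕ) : ℝ) ^ (-(3 / 2) : ℝ))
      ≤ 24 * ((((p : ℕ) : ℝ))⁻¹ + (((p : ℕ) : ℝ))⁻¹) := by
        rw [← h3]; linarith
    _ ≤ 24 * (1 / 96 + 1 / 96) := by linarith
    _ = 1 / 2 := by norm_num

lemma sfStar_tail_ne_zero {c : ℂ} (hc : 1 / 2 < c.re) {p : Nat.Primes} (hp : 96 ≤ (p : ℕ)) :
    sfStarFactor c p ≠ 0 := by
  intro h
  have := sfStar_tail_small hc hp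
  rw [h] at this
  norm_num at this

lemma sfStar_tail_slitPlane {c : ℂ} (hc : 1 / 2 < c.re) {p : Nat.Primes} (hp : 96 ≤ (p : ℕ)) :
    sfStarFactor c p ∈ Complex.slitPlane := by
  have h := sfStar_tail_small hc hp
  have hre : |(sfStarFactor c p - 1).re| ≤ ‖sfStarFactor c p - 1‖ := Complex.abs_re_le_norm _
  left
  have : (sfStarFactor c p).re = 1 + (sfStarFactor c p - 1).re := by
    simp [Complex.sub_re]
  rw [this]
  have := abs_le.mp (hre.trans h)
  linarith [this.1]

lemma sfStar_norm_log_le {c : ℂ} (hc : 1 / 2 < c.re) {p : Nat.Primes} (hp : 96 ≤ (p : ℕ)) :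
    ‖Complex.log (sfStarFactor c p)‖ ≤
      36 * (((p : ℕ) : ℝ) ^ (-(2 * c.re)) + ((p : ℕ) : ℝ) ^ (-(3 / 2) : ℝ)) := by
  have h : sfStarFactor c p = 1 + (sfStarFactor c p - 1) := by ring
  rw [h]
  refine (norm_log_one_add_half_le_self (sfStar_tail_small hc hp)).trans ?_
  have := norm_sfStarFactor_sub_one_le hc p
  linarith

lemma sfStar_differentiable (p : Nat.Primes) :
    Differentiable ℂ (fun c => sfStarFactor c p) := by
  have hP := sfStar_cast_ne p
  have h1 : Differentiable ℂ (fun c : ℂ => ((p : ℕ) : ℂ) ^ (3 * c - 1)) :=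
    Differentiable.const_cpow ((differentiable_id.const_mul 3).sub_const 1) (Or.inl hP)
  have h1' : Differentiable ℂ (fun c : ℂ => (((p : ℕ) : ℂ) ^ (3 * c - 1))⁻¹) :=
    h1.inv fun c => by
      intro h
      exact hP ((cpow_eq_zero_iff _ _).1 h).1
  have h2 : Differentiable ℂ (fun c : ℂ => ((p : ℕ) : ℂ) ^ c) :=
    differentiable_id.const_cpow (Or.inl hP)
  unfold sfStarFactor
  refine Differentiable.const_add _ ?_
  refine h1'.mul ?_
  refine Differentiable.sub_const ?_ _
  refine Differentiable.const_mul ?_ _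
  exact ((((differentiable_const _).sub h2).div_const _).pow 3)

lemma sfStar_norm_le {c : ℂ} (hc : 1 / 2 < c.re) (p : Nat.Primes) :
    ‖sfStarFactor c p‖ ≤ 49 := by
  have hr1 : (1 : ℝ) ≤ ((p : ℕ) : ℝ) := by
    have := p.2.two_le; exact_mod_cast by omega
  have h1 : ((p : ℕ) : ℝ) ^ (-(2 * c.re)) ≤ 1 :=
    Real.rpow_le_one_of_one_le_of_nonpos hr1 (by linarith)
  have h2 : ((p : ℕ) : ℝ) ^ (-(3 / 2) : ℝ) ≤ 1 :=
    Real.rpow_le_one_of_one_le_of_nonpos hr1 (by norm_num)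
  have h3 := norm_sfStarFactor_sub_one_le hc p
  calc ‖sfStarFactor c p‖ = ‖(sfStarFactor c p - 1) + 1‖ := by ring_nf
    _ ≤ ‖sfStarFactor c p - 1‖ + ‖(1 : ℂ)‖ := norm_add_le _ _
    _ ≤ 49 := by
        simp only [norm_one]
        linarith

set_option maxHeartbeats 2000000 in
/-- The Euler product `𝔖_f*(c) = ∏_p (1 + (1/p^{3c-1})(((p-1)/p)((p-p^c)/(p-1))³ - 1))`
converges absolutely on `Re(c) > 1/2`, defines an analytic function there, and is
uniformly bounded on any half-plane `Re(c) > 1/2 + ε`. -/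
theorem sfStar_convergence_analytic_bounded :
    (∀ c : ℂ, 1 / 2 < c.re → Summable fun p : Nat.Primes => ‖sfStarFactor c p - 1‖) ∧
    AnalyticOn ℂ (fun c : ℂ => ∏' p : Nat.Primes, sfStarFactor c p) {c : ℂ | 1 / 2 < c.re} ∧
    ∀ ε > (0 : ℝ), ∃ C : ℝ, ∀ c : ℂ, 1 / 2 + ε < c.re →
      ‖∏' p : Nat.Primes, sfStarFactor c p‖ ≤ C := by
  -- the set of "small" primes
  set s : Set Nat.Primes := {p | (p : ℕ) < 96} with hs
  have hfin : s.Finite := by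
    have : s ⊆ (fun p : Nat.Primes => (p : ℕ)) ⁻¹' (Set.Iio 96) := fun p hp => hp
    exact Set.Finite.subset (Set.Finite.preimage
      (Set.injOn_of_injective Nat.Primes.coe_nat_injective) (Set.finite_Iio 96)) this
  haveI : Fintype ↥s := hfin.fintype
  have hmem : ∀ p : ↥(sᶜ), 96 ≤ ((p : Nat.Primes) : ℕ) := fun p => not_lt.1 p.2
  -- the tail log-sum and the candidate function
  set L : ℂ → ℂ := fun c => ∑' p : ↥(sᶜ), Complex.log (sfStarFactor c ↑p) with hL
  set G : ℂ → ℂ :=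
    fun c => (∏ p : ↥s, sfStarFactor c ↑p) * Complex.exp (L c) with hG
  -- summability of tail logs
  have hmaj : ∀ {k : ℝ}, 0 ≤ k → ∀ {c : ℂ}, 1 / 2 < c.re →
      Summable (fun p : ↥(sᶜ) =>
        k * ((((p : Nat.Primes) : ℕ) : ℝ) ^ (-(2 * c.re))
          + (((p : Nat.Primes) : ℕ) : ℝ) ^ (-(3 / 2) : ℝ))) := by
    intro k hk c hc
    refine Summable.mul_left _ (Summable.add ?_ ?_)
    · exact (sfStar_summable_rpow (by linarith)).subtype _
    · exact (sfStar_summable_rpow (by norm_num)).subtype _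
  have hsumlognorm : ∀ {c : ℂ}, 1 / 2 < c.re →
      Summable (fun p : ↥(sᶜ) => ‖Complex.log (sfStarFactor c ↑p)‖) := by
    intro c hc
    refine Summable.of_nonneg_of_le (fun _ => norm_nonneg _)
      (fun p => sfStar_norm_log_le hc (hmem p)) (hmaj (by norm_num) hc)
  have hsumlog : ∀ {c : ℂ}, 1 / 2 < c.re →
      Summable (fun p : ↥(sᶜ) => Complex.log (sfStarFactor c ↑p)) :=
    fun hc => (hsumlognorm hc).of_norm
  -- the tprod equals G on the half plane
  have hasProdG : ∀ c : ℂ, 1 / 2 < c.re → HasProd (fun p => sfStarFactor c p) (G c) := by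
    intro c hc
    have hexp := (hsumlog hc).hasSum.cexp
    have heq : (Complex.exp ∘ fun p : ↥(sᶜ) => Complex.log (sfStarFactor c ↑p))
        = fun p : ↥(sᶜ) => sfStarFactor c ↑p :=
      funext fun p => Complex.exp_log (sfStar_tail_ne_zero hc (hmem p))
    rw [heq] at hexp
    have hhead : HasProd (fun p : ↥s => sfStarFactor c ↑p)
        (∏ p : ↥s, sfStarFactor c ↑p) := hasProd_fintype _
    exact hhead.mul_compl hexp
  refine ⟨fun c hc => sfStar_summable_norm hc, ?_, ?_⟩
  · -- analyticity
    intro c₀ hc₀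
    have hc₀re : 1 / 2 < c₀.re := hc₀
    set ε : ℝ := (c₀.re - 1 / 2) / 2 with hε
    have hεpos : 0 < ε := by simp only [hε]; linarith
    set S' : Set ℂ := {c : ℂ | 1 / 2 + ε < c.re} with hS'
    have hS'open : IsOpen S' := isOpen_lt continuous_const Complex.continuous_re
    have hc₀' : c₀ ∈ S' := by simp only [hS', Set.mem_setOf_eq, hε]; linarith
    have hS'sub : ∀ c ∈ S', 1 / 2 < c.re := fun c hc => by
      have : 1 / 2 + ε < c.re := hc; linarith
    -- uniform bound on S'
    have hbound : ∀ (p : ↥(sᶜ)) (c : ℂ), c ∈ S' →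
        ‖Complex.log (sfStarFactor c ↑p)‖ ≤
          36 * ((((p : Nat.Primes) : ℕ) : ℝ) ^ (-(1 + 2 * ε))
            + (((p : Nat.Primes) : ℕ) : ℝ) ^ (-(3 / 2) : ℝ)) := by
      intro p c hc
      have hcre : 1 / 2 + ε < c.re := hc
      have hr1 : (1 : ℝ) ≤ (((p : Nat.Primes) : ℕ) : ℝ) := by
        have := (p : Nat.Primes).2.two_le; exact_mod_cast by omega
      have hmono : (((p : Nat.Primes) : ℕ) : ℝ) ^ (-(2 * c.re)) ≤
          (((p : Nat.Primes) : ℕ) : ℝ) ^ (-(1 + 2 * ε)) :=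
        Real.rpow_le_rpow_of_exponent_le hr1 (by linarith)
      refine (sfStar_norm_log_le (hS'sub c hc) (hmem p)).trans ?_
      have : (0:ℝ) ≤ (((p : Nat.Primes) : ℕ) : ℝ) ^ (-(3 / 2) : ℝ) := Real.rpow_nonneg (by positivity) _
      linarith
    have hu : Summable (fun p : ↥(sᶜ) =>
        36 * ((((p : Nat.Primes) : ℕ) : ℝ) ^ (-(1 + 2 * ε))
          + (((p : Nat.Primes) : ℕ) : ℝ) ^ (-(3 / 2) : ℝ))) := by
      refine Summable.mul_left _ (Summable.add ?_ ?_)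
      · exact (sfStar_summable_rpow (by linarith)).subtype _
      · exact (sfStar_summable_rpow (by norm_num)).subtype _
    have htu : TendstoUniformlyOn
        (fun (t : Finset ↥(sᶜ)) c => ∑ p ∈ t, Complex.log (sfStarFactor c ↑p))
        L Filter.atTop S' := tendstoUniformlyOn_tsum hu hbound
    have hLdiff : DifferentiableOn ℂ L S' := by
      refine htu.tendstoLocallyUniformlyOn.differentiableOn
        (Filter.Eventually.of_forall fun t => ?_) hS'open
      refine DifferentiableOn.fun_sum fun p _ => ?_
      intro x hx
      exact (((sfStar_differentiable ↑p) x).clog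
        (sfStar_tail_slitPlane (hS'sub x hx) (hmem p))).differentiableWithinAt
    have hheaddiff : DifferentiableOn ℂ (fun c => ∏ p : ↥s, sfStarFactor c ↑p) S' := by
      intro x hx
      exact (DifferentiableAt.fun_finsetProd (u := Finset.univ)
        (f := fun (p : ↥s) (c : ℂ) => sfStarFactor c ↑p)
        (fun p _ => (sfStar_differentiable ↑p) x)).differentiableWithinAt
    have hGdiff : DifferentiableOn ℂ G S' := hheaddiff.mul hLdiff.cexp
    have hGanalytic := hGdiff.analyticOnNhd hS'open
    have hFG : Set.EqOn (fun c : ℂ => ∏' p : Nat.Primes, sfStarFactor c p) G S' :=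
      fun c hc => (hasProdG c (hS'sub c hc)).tprod_eq
    have hFq : (fun c : ℂ => ∏' p : Nat.Primes, sfStarFactor c p) =ᶠ[nhds c₀] G :=
      hFG.eventuallyEq_of_mem (hS'open.mem_nhds hc₀')
    exact ((hGanalytic c₀ hc₀').congr hFq.symm).analyticWithinAt
  · -- uniform boundedness
    intro ε hε
    refine ⟨49 ^ (Fintype.card ↥s) * Real.exp (∑' p : ↥(sᶜ),
      36 * ((((p : Nat.Primes) : ℕ) : ℝ) ^ (-(1 + 2 * ε))
        + (((p : Nat.Primes) : ℕ) : ℝ) ^ (-(3 / 2) : ℝ))), ?_⟩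
    intro c hc
    have hc' : 1 / 2 < c.re := by linarith
    rw [(hasProdG c hc').tprod_eq]
    have hu : Summable (fun p : ↥(sᶜ) =>
        36 * ((((p : Nat.Primes) : ℕ) : ℝ) ^ (-(1 + 2 * ε))
          + (((p : Nat.Primes) : ℕ) : ℝ) ^ (-(3 / 2) : ℝ))) := by
      refine Summable.mul_left _ (Summable.add ?_ ?_)
      · exact (sfStar_summable_rpow (by linarith)).subtype _
      · exact (sfStar_summable_rpow (by norm_num)).subtype _
    have hbound : ∀ p : ↥(sᶜ),
        ‖Complex.log (sfStarFactor c ↑p)‖ ≤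
          36 * ((((p : Nat.Primes) : ℕ) : ℝ) ^ (-(1 + 2 * ε))
            + (((p : Nat.Primes) : ℕ) : ℝ) ^ (-(3 / 2) : ℝ)) := by
      intro p
      have hr1 : (1 : ℝ) ≤ (((p : Nat.Primes) : ℕ) : ℝ) := by
        have := (p : Nat.Primes).2.two_le; exact_mod_cast by omega
      have hmono : (((p : Nat.Primes) : ℕ) : ℝ) ^ (-(2 * c.re)) ≤
          (((p : Nat.Primes) : ℕ) : ℝ) ^ (-(1 + 2 * ε)) :=
        Real.rpow_le_rpow_of_exponent_le hr1 (by linarith)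
      refine (sfStar_norm_log_le hc' (hmem p)).trans ?_
      have : (0:ℝ) ≤ (((p : Nat.Primes) : ℕ) : ℝ) ^ (-(3 / 2) : ℝ) :=
        Real.rpow_nonneg (by positivity) _
      linarith
    have hLnorm : ‖L c‖ ≤ ∑' p : ↥(sᶜ),
        36 * ((((p : Nat.Primes) : ℕ) : ℝ) ^ (-(1 + 2 * ε))
          + (((p : Nat.Primes) : ℕ) : ℝ) ^ (-(3 / 2) : ℝ)) := by
      refine (norm_tsum_le_tsum_norm (hsumlognorm hc')).trans ?_
      exact Summable.tsum_le_tsum hbound (hsumlognorm hc') hu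
    have hexp : ‖Complex.exp (L c)‖ ≤ Real.exp (∑' p : ↥(sᶜ),
        36 * ((((p : Nat.Primes) : ℕ) : ℝ) ^ (-(1 + 2 * ε))
          + (((p : Nat.Primes) : ℕ) : ℝ) ^ (-(3 / 2) : ℝ))) := by
      rw [Complex.norm_exp]
      exact Real.exp_le_exp.mpr ((Complex.re_le_norm _).trans hLnorm)
    have hhead : ‖∏ p : ↥s, sfStarFactor c ↑p‖ ≤ 49 ^ (Fintype.card ↥s) := by
      rw [norm_prod]
      calc ∏ p : ↥s, ‖sfStarFactor c ↑p‖ ≤ ∏ _p : ↥s, (49 : ℝ) :=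
            Finset.prod_le_prod (fun _ _ => norm_nonneg _)
              (fun p _ => sfStar_norm_le hc' ↑p)
        _ = 49 ^ (Fintype.card ↥s) := by
            rw [Finset.prod_const, Finset.card_univ]
    calc ‖G c‖ = ‖∏ p : ↥s, sfStarFactor c ↑p‖ * ‖Complex.exp (L c)‖ := norm_mul _ _
      _ ≤ 49 ^ (Fintype.card ↥s) * Real.exp (∑' p : ↥(sᶜ),
          36 * ((((p : Nat.Primes) : ℕ) : ℝ) ^ (-(1 + 2 * ε))
            + (((p : Nat.Primes) : ℕ) : ℝ) ^ (-(3 / 2) : ℝ))) :=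
          mul_le_mul hhead hexp (norm_nonneg _) (by positivity)
end
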